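/- Let (a_n)_{n≥1} be a nondecreasing sequence of reals with a_n ≥ 1, let s > 1, set n_m := ⌈exp(m^s)⌉, and suppose limsup_{m→∞} (log a_{n_m})/(log n_m) ≤ c. Then limsup_{n→∞} (log a_n)/(log n) ≤ c. -/

import Mathlib

open Filter Real

namespace LimsupSubseqAux

noncomputable def N (s : ℝ) (m : ℕ) : ℕ := ⌈Real.exp ((m : ℝ) ^ s)⌉₊

lemma one_le_N (s : ℝ) (m : ℕ) : 1 ≤ N s m :=
  Nat.one_le_ceil_iff.mpr (Real.exp_pos _)

lemma one_le_N_real (s : ℝ) (m : ℕ) : (1 : ℝ) ≤ (N s m : ℝ) := by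
  exact_mod_cast one_le_N s m

lemma one_le_rpow_nat (s : ℝ) (hs : 0 ≤ s) (m : ℕ) (hm : 1 ≤ m) : (1 : ℝ) ≤ (m : ℝ) ^ s :=
  Real.one_le_rpow (by exact_mod_cast hm) hs

lemma log_N_ge (s : ℝ) (m : ℕ) : (m : ℝ) ^ s ≤ Real.log (N s m) := by
  have h1 : Real.exp ((m : ℝ) ^ s) ≤ (N s m : ℝ) := Nat.le_ceil _
  calc (m : ℝ) ^ s = Real.log (Real.exp ((m : ℝ) ^ s)) := (Real.log_exp _).symm
    _ ≤ Real.log (N s m) := Real.log_le_log (Real.exp_pos _) h1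

lemma log_N_pos (s : ℝ) (hs : 0 ≤ s) (m : ℕ) (hm : 1 ≤ m) : 0 < Real.log (N s m) :=
  lt_of_lt_of_le (by linarith [one_le_rpow_nat s hs m hm]) (log_N_ge s m)

lemma lt_N (s : ℝ) (hs : 1 ≤ s) (m : ℕ) : m < N s m := by
  have h0 : ((m : ℝ)) ≤ (m : ℝ) ^ s := by
    rcases Nat.eq_zero_or_pos m with h | h
    · simp [h, Real.zero_rpow (by positivity : s ≠ 0)]
    · calc (m : ℝ) = (m : ℝ) ^ (1 : ℝ) := (Real.rpow_one _).symm
        _ ≤ (m : ℝ) ^ s := Real.rpow_le_rpow_of_exponent_le (by exact_mod_cast h) hs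
  have h1 : ((m : ℝ)) < Real.exp ((m : ℝ) ^ s) := by
    have := Real.add_one_le_exp ((m : ℝ) ^ s)
    linarith
  have h2 : ((m : ℝ)) < (N s m : ℝ) := lt_of_lt_of_le h1 (Nat.le_ceil _)
  exact_mod_cast h2

lemma tendsto_N (s : ℝ) (hs : 1 ≤ s) : Tendsto (N s) atTop atTop :=
  tendsto_atTop_mono (fun m => (lt_N s hs m).le) tendsto_id

lemma log_N_succ_le (s : ℝ) (hs : 0 ≤ s) (m : ℕ) :
    Real.log (N s (m + 1)) ≤ ((m : ℝ) + 1) ^ s + Real.log 2 := by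
  have hx : (0 : ℝ) ≤ Real.exp (((m + 1 : ℕ) : ℝ) ^ s) := (Real.exp_pos _).le
  have h1 : (N s (m + 1) : ℝ) < Real.exp (((m + 1 : ℕ) : ℝ) ^ s) + 1 :=
    Nat.ceil_lt_add_one hx
  have hexp1 : (1 : ℝ) ≤ Real.exp (((m + 1 : ℕ) : ℝ) ^ s) :=
    Real.one_le_exp (by positivity)
  have h2 : (N s (m + 1) : ℝ) ≤ 2 * Real.exp (((m + 1 : ℕ) : ℝ) ^ s) := by linarith
  have h3 : Real.log (N s (m + 1)) ≤ Real.log (2 * Real.exp (((m + 1 : ℕ) : ℝ) ^ s)) :=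
    Real.log_le_log (by linarith [one_le_N_real s (m + 1)]) h2
  rw [Real.log_mul (by norm_num) (Real.exp_ne_zero _), Real.log_exp] at h3
  have : (((m + 1 : ℕ) : ℝ)) = (m : ℝ) + 1 := by push_cast; ring
  rw [this] at h3
  linarith

/-- The ratio of consecutive logs is eventually at most `1 + δ`. -/
lemma ratio_eventually (s : ℝ) (hs : 1 ≤ s) (δ : ℝ) (hδ : 0 < δ) :
    ∀ᶠ m in atTop, Real.log (N s (m + 1)) / Real.log (N s m) ≤ 1 + δ := by
  have hspos : (0 : ℝ) < s := by linarith
  -- the comparison sequence tends to 1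
  have h1 : Tendsto (fun m : ℕ => ((m : ℝ) + 1) / (m : ℝ)) atTop (nhds 1) := by
    have h0 : Tendsto (fun m : ℕ => 1 + 1 / (m : ℝ)) atTop (nhds 1) := by
      simpa using (tendsto_const_nhds : Tendsto (fun _ : ℕ => (1:ℝ)) atTop (nhds 1)).add
        (tendsto_one_div_atTop_nhds_zero_nat : Tendsto (fun n : ℕ => 1 / (n : ℝ)) atTop (nhds 0))
    refine h0.congr' ?_
    filter_upwards [eventually_ge_atTop 1] with m hm
    have : (m : ℝ) ≠ 0 := by positivity
    field_simp
  have h2 : Tendsto (fun m : ℕ => (((m : ℝ) + 1) / (m : ℝ)) ^ s) atTop (nhds 1) := by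
    have hcont : ContinuousAt (fun x : ℝ => x ^ s) 1 :=
      Real.continuousAt_rpow_const 1 s (Or.inl one_ne_zero)
    have := hcont.tendsto.comp h1
    simpa [Real.one_rpow, Function.comp_def] using this
  have hpow : Tendsto (fun m : ℕ => (m : ℝ) ^ s) atTop atTop :=
    (tendsto_rpow_atTop hspos).comp tendsto_natCast_atTop_atTop
  have h3 : Tendsto (fun m : ℕ => Real.log 2 / (m : ℝ) ^ s) atTop (nhds 0) :=
    tendsto_const_nhds.div_atTop hpow
  have hsum : Tendsto (fun m : ℕ => (((m : ℝ) + 1) / (m : ℝ)) ^ s + Real.log 2 / (m : ℝ) ^ s)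
      atTop (nhds 1) := by
    simpa using h2.add h3
  have hev := hsum.eventually (eventually_le_nhds (by linarith : (1 : ℝ) < 1 + δ))
  filter_upwards [hev, eventually_ge_atTop 1] with m hm hm1
  have hm1' : (1 : ℝ) ≤ (m : ℝ) := by exact_mod_cast hm1
  have hmpos : (0 : ℝ) < (m : ℝ) ^ s := by positivity
  have hms : (1 : ℝ) ≤ (m : ℝ) ^ s := one_le_rpow_nat s hspos.le m hm1
  have hnum : (0 : ℝ) ≤ ((m : ℝ) + 1) ^ s + Real.log 2 := by
    have : (1 : ℝ) ≤ ((m : ℝ) + 1) ^ s := Real.one_le_rpow (by linarith) hspos.le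
    have := Real.log_nonneg (by norm_num : (1 : ℝ) ≤ 2)
    linarith
  have key : Real.log (N s (m + 1)) / Real.log (N s m)
      ≤ (((m : ℝ) + 1) ^ s + Real.log 2) / (m : ℝ) ^ s :=
    div_le_div₀ hnum (log_N_succ_le s hspos.le m) (by linarith [one_le_rpow_nat s hspos.le m hm1])
      (log_N_ge s m)
  have hrw : (((m : ℝ) + 1) ^ s + Real.log 2) / (m : ℝ) ^ s
      = (((m : ℝ) + 1) / (m : ℝ)) ^ s + Real.log 2 / (m : ℝ) ^ s := by
    rw [Real.div_rpow (by linarith) (by linarith : (0:ℝ) ≤ (m:ℝ))]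
    rw [add_div]
  rw [hrw] at key
  exact key.trans hm

lemma f_nonneg (a : ℕ → ℝ) (hone : ∀ n, 1 ≤ a n) (s : ℝ) (m : ℕ) :
    0 ≤ Real.log (a (N s m)) / Real.log (N s m) :=
  div_nonneg (Real.log_nonneg (hone _)) (Real.log_nonneg (one_le_N_real s m))

lemma g_nonneg (a : ℕ → ℝ) (hone : ∀ n, 1 ≤ a n) (n : ℕ) :
    0 ≤ Real.log (a n) / Real.log n := by
  apply div_nonneg (Real.log_nonneg (hone _))
  rcases Nat.eq_zero_or_pos n with h | h
  · simp [h]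
  · exact Real.log_nonneg (by exact_mod_cast h)

/-- The sandwich step: between consecutive subsequence indices. -/
lemma sandwich (a : ℕ → ℝ) (hmono : Monotone a) (hone : ∀ n, 1 ≤ a n)
    (s : ℝ) (hs : 1 ≤ s) (b d : ℝ) (hb : 0 ≤ b) (M : ℕ) (hM : 1 ≤ M)
    (hf : ∀ m, M ≤ m → Real.log (a (N s (m + 1))) / Real.log (N s (m + 1)) ≤ b)
    (hR : ∀ m, M ≤ m → Real.log (N s (m + 1)) / Real.log (N s m) ≤ d)
    (n : ℕ) (hn : N s M ≤ n) :
    Real.log (a n) / Real.log n ≤ b * d := by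
  have hspos : (0 : ℝ) ≤ s := by linarith
  -- find the bracketing index m
  have hex : ∃ k, n < N s (M + k) := ⟨n + 1, by have := lt_N s hs (M + (n + 1)); omega⟩
  set k₀ := Nat.find hex with hk₀
  have hk₀spec : n < N s (M + k₀) := Nat.find_spec hex
  have hk₀pos : 1 ≤ k₀ := by
    by_contra h
    have hk0 : k₀ = 0 := by omega
    rw [hk0] at hk₀spec
    simp at hk₀spec
    omega
  set m := M + (k₀ - 1) with hm
  have hmM : M ≤ m := Nat.le_add_right _ _
  have hm1 : 1 ≤ m := le_trans hM hmM
  have hlow : N s m ≤ n := by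
    have h := Nat.find_min hex (m := k₀ - 1) (by omega)
    rw [← hm] at h
    omega
  have hhigh : n < N s (m + 1) := by
    have : m + 1 = M + k₀ := by omega
    rw [this]; exact hk₀spec
  -- notation
  set A := Real.log (a (N s (m + 1))) with hA
  set L := Real.log (N s (m + 1)) with hL
  set B := Real.log (N s m) with hB
  have hBpos : 0 < B := log_N_pos s hspos m hm1
  have hLpos : 0 < L := log_N_pos s hspos (m + 1) (by omega)
  have hA0 : 0 ≤ A := Real.log_nonneg (hone _)
  have hBLn : B ≤ Real.log n :=
    Real.log_le_log (by linarith [one_le_N_real s m]) (by exact_mod_cast hlow)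
  have step1 : Real.log (a n) ≤ A :=
    Real.log_le_log (by linarith [hone n]) (hmono hhigh.le)
  have step2 : Real.log (a n) / Real.log n ≤ A / B :=
    div_le_div₀ hA0 step1 hBpos hBLn
  have hfac : A / B = (A / L) * (L / B) := by
    field_simp
  have step3 : (A / L) * (L / B) ≤ b * d :=
    mul_le_mul (hf m hmM) (hR m hmM) (div_nonneg hLpos.le hBpos.le) hb
  calc Real.log (a n) / Real.log n ≤ A / B := step2
    _ = (A / L) * (L / B) := hfac
    _ ≤ b * d := step3

end LimsupSubseqAux

open LimsupSubseqAux in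
/-- Subsequence-to-full-sequence step: if `(a_n)` is nondecreasing with `a_n ≥ 1`,
`s > 1`, `n_m = ⌈exp(m^s)⌉`, and `limsup_m (log a_{n_m})/(log n_m) ≤ c`, then
`limsup_n (log a_n)/(log n) ≤ c`. -/
theorem limsup_log_ratio_of_subseq (a : ℕ → ℝ) (hmono : Monotone a)
    (hone : ∀ n, 1 ≤ a n) (s : ℝ) (hs : 1 < s) (c : ℝ)
    (hsub : Filter.limsup
        (fun m : ℕ => Real.log (a ⌈Real.exp ((m : ℝ) ^ s)⌉₊) /
          Real.log (⌈Real.exp ((m : ℝ) ^ s)⌉₊ : ℝ)) Filter.atTop ≤ c) :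
    Filter.limsup (fun n : ℕ => Real.log (a n) / Real.log n) Filter.atTop ≤ c := by
  have hs1 : (1 : ℝ) ≤ s := hs.le
  set g : ℕ → ℝ := fun n => Real.log (a n) / Real.log n with hg
  set f : ℕ → ℝ := fun m => Real.log (a (N s m)) / Real.log (N s m) with hf
  have hsub' : Filter.limsup f Filter.atTop ≤ c := hsub
  show Filter.limsup g Filter.atTop ≤ c
  by_cases hbdd : Filter.IsBoundedUnder (· ≤ ·) Filter.atTop g
  · -- bounded case
    obtain ⟨b₀, hb₀⟩ := hbdd
    have hb₀' : ∀ᶠ n in atTop, g n ≤ b₀ := by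
      rwa [Filter.eventually_map] at hb₀
    have hfb : Filter.IsBoundedUnder (· ≤ ·) Filter.atTop f :=
      ⟨b₀, Filter.eventually_map.2 ((tendsto_N s hs1).eventually hb₀')⟩
    have hc0 : 0 ≤ c :=
      le_trans (Filter.le_limsup_of_frequently_le
        ((Filter.Eventually.of_forall (f_nonneg a hone s)).frequently) hfb) hsub'
    have cob : Filter.IsCoboundedUnder (· ≤ ·) Filter.atTop g :=
      Filter.IsBoundedUnder.isCoboundedUnder_le ⟨0, Filter.eventually_map.2
        (Filter.Eventually.of_forall (g_nonneg a hone))⟩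
    refine le_of_forall_pos_le_add fun ε hε => ?_
    obtain ⟨K, hK⟩ : ∃ K : ℝ, K = c + ε / 2 := ⟨_, rfl⟩
    have hK0 : 0 ≤ K := by linarith
    obtain ⟨δ, hδdef⟩ : ∃ δ : ℝ, δ = (ε / 2) / (K + 1) := ⟨_, rfl⟩
    have hδ : 0 < δ := by rw [hδdef]; exact div_pos (by linarith) (by linarith)
    have hfev : ∀ᶠ m in atTop, f m < K :=
      Filter.eventually_lt_of_limsup_lt (lt_of_le_of_lt hsub' (by linarith)) hfb
    obtain ⟨M₁, hM₁⟩ := Filter.eventually_atTop.1 hfev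
    obtain ⟨M₂, hM₂⟩ := Filter.eventually_atTop.1 (ratio_eventually s hs1 δ hδ)
    obtain ⟨M, hMdef⟩ : ∃ M : ℕ, M = max (max M₁ M₂) 1 := ⟨_, rfl⟩
    refine Filter.limsup_le_of_le cob ?_
    filter_upwards [Filter.eventually_ge_atTop (N s M)] with n hn
    have key : g n ≤ K * (1 + δ) := by
      refine sandwich a hmono hone s hs1 K (1 + δ) hK0 M (by omega) ?_ ?_ n hn
      · intro m hm
        have hMM₁ : M₁ ≤ M := by omega
        exact (hM₁ (m + 1) (by omega)).le
      · intro m hm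
        exact hM₂ m (by omega)
    have hcancel : δ * (K + 1) = ε / 2 := by
      rw [hδdef]; exact div_mul_cancel₀ _ (by linarith)
    nlinarith [key, hδ.le, hK0]
  · -- unbounded case: both limsups are junk value 0
    have hfunb : ¬ Filter.IsBoundedUnder (· ≤ ·) Filter.atTop f := by
      rintro ⟨b, hb⟩
      rw [Filter.eventually_map] at hb
      obtain ⟨M₁, hM₁⟩ := Filter.eventually_atTop.1 hb
      obtain ⟨M₂, hM₂⟩ := Filter.eventually_atTop.1 (ratio_eventually s hs1 1 one_pos)
      apply hbdd
      obtain ⟨M, hMdef⟩ : ∃ M : ℕ, M = max (max M₁ M₂) 1 := ⟨_, rfl⟩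
      refine ⟨max b 0 * (1 + 1), Filter.eventually_map.2 ?_⟩
      filter_upwards [Filter.eventually_ge_atTop (N s M)] with n hn
      refine sandwich a hmono hone s hs1 (max b 0) (1 + 1) (le_max_right _ _) M
        (by omega) ?_ ?_ n hn
      · intro m hm
        exact le_trans (hM₁ (m + 1) (by omega)) (le_max_left _ _)
      · intro m hm
        exact hM₂ m (by omega)
    have hfempty : {x : ℝ | ∀ᶠ m in atTop, f m ≤ x} = ∅ := by
      ext x
      simp only [Set.mem_setOf_eq, Set.mem_empty_iff_false, iff_false]
      intro h
      exact hfunb ⟨x, Filter.eventually_map.2 h⟩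
    have hgempty : {x : ℝ | ∀ᶠ n in atTop, g n ≤ x} = ∅ := by
      ext x
      simp only [Set.mem_setOf_eq, Set.mem_empty_iff_false, iff_false]
      intro h
      exact hbdd ⟨x, Filter.eventually_map.2 h⟩
    have hflim : Filter.limsup f Filter.atTop = 0 := by
      rw [Filter.limsup_eq, hfempty, Real.sInf_empty]
    have hglim : Filter.limsup g Filter.atTop = 0 := by
      rw [Filter.limsup_eq, hgempty, Real.sInf_empty]
    rw [hglim]
    rw [hflim] at hsub'
    exact hsub'
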